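/- Let A = (a_ij) be an n×n symmetrically reciprocal matrix with positive entries and let x ∈ ℝⁿ be a positive vector. Then the maximum relative approximation error satisfies max_{i,j} |a_ij − x_i/x_j| / a_ij = Δ_A(x) − 1, where Δ_A(x) = max_{i,j} a_ij·x_j/x_i. Consequently, a positive vector minimizes the maximum relative error if and only if it minimizes Δ_A. -/

import Mathlib

/-- The maximum relative approximation error of a consistent matrix `(x_i/x_j)`
to a positive matrix `A`. -/
noncomputable def relErr {n : ℕ} (A : Matrix (Fin n) (Fin n) ℝ) (x : Fin n → ℝ) : ℝ :=
  ⨆ i, ⨆ j, |A i j - x i / x j| / A i j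

/-- `Δ_A(x) = max_{i,j} a_ij · x_j / x_i`. -/
noncomputable def tDelta {n : ℕ} (A : Matrix (Fin n) (Fin n) ℝ) (x : Fin n → ℝ) : ℝ :=
  ⨆ i, ⨆ j, A i j * x j / x i

lemma relErr_eq_aux {n : ℕ} (hn : 1 ≤ n)
    (A : Matrix (Fin n) (Fin n) ℝ) (hA : ∀ i j, 0 < A i j)
    (hrec : ∀ i j, A j i = 1 / A i j)
    (x : Fin n → ℝ) (hx : ∀ i, 0 < x i) :
    relErr A x = tDelta A x - 1 := by
  have hne : Nonempty (Fin n) := ⟨⟨0, hn⟩⟩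
  set g : Fin n → Fin n → ℝ := fun i j => A i j * x j / x i with hg
  have hgpos : ∀ i j, 0 < g i j := fun i j => div_pos (mul_pos (hA i j) (hx j)) (hx i)
  have hginv : ∀ i j, g j i * g i j = 1 := by
    intro i j
    have h1 : A i j ≠ 0 := (hA i j).ne'
    have h2 : x i ≠ 0 := (hx i).ne'
    have h3 : x j ≠ 0 := (hx j).ne'
    simp only [hg]
    rw [hrec i j]
    field_simp
  have hDelta_ge : ∀ i j, g i j ≤ tDelta A x := by
    intro i j
    exact le_trans (le_ciSup (Finite.bddAbove_range _) j)
      (le_ciSup (Finite.bddAbove_range (fun i => ⨆ j, g i j)) i)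
  have hDelta_one : (1:ℝ) ≤ tDelta A x := by
    obtain ⟨i⟩ := hne
    have hAii : A i i = 1 := by
      have h := hrec i i
      have hp := hA i i
      have h2 : (A i i - 1) * (A i i + 1) = 0 := by
        field_simp at h
        nlinarith
      rcases mul_eq_zero.mp h2 with h3 | h3
      · linarith
      · linarith
    have : g i i = 1 := by
      simp only [hg, hAii, one_mul, div_self (ne_of_gt (hx i))]
    linarith [hDelta_ge i i]
  obtain ⟨⟨i0, j0⟩, hmax⟩ := Finite.exists_max (fun p : Fin n × Fin n => g p.1 p.2)
  have hDmax : tDelta A x = g i0 j0 := by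
    apply le_antisymm
    · exact ciSup_le fun i => ciSup_le fun j => hmax (i, j)
    · exact hDelta_ge i0 j0
  have hf : ∀ i j, |A i j - x i / x j| / A i j = |g j i - 1| := by
    intro i j
    have h1 : (A i j - x i / x j) / A i j = 1 - g j i := by
      simp only [hg]
      rw [hrec i j]
      have h1 : A i j ≠ 0 := (hA i j).ne'
      have h2 : x i ≠ 0 := (hx i).ne'
      have h3 : x j ≠ 0 := (hx j).ne'
      field_simp
    calc |A i j - x i / x j| / A i j = |(A i j - x i / x j) / A i j| := by
          rw [abs_div, abs_of_pos (hA i j)]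
      _ = |1 - g j i| := by rw [h1]
      _ = |g j i - 1| := abs_sub_comm _ _
  have hkey : ∀ i j, |g i j - 1| ≤ tDelta A x - 1 := by
    intro i j
    rw [abs_sub_le_iff]
    constructor
    · linarith [hDelta_ge i j]
    · have h1 : g j i ≤ tDelta A x := hDelta_ge j i
      have h2 : g j i * g i j = 1 := hginv i j
      nlinarith [hgpos i j, sq_nonneg (g i j - 1)]
  have hre : relErr A x = ⨆ i, ⨆ j, |g j i - 1| := by
    simp only [relErr, hf]
  rw [hre]
  apply le_antisymm
  · exact ciSup_le fun i => ciSup_le fun j => hkey j i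
  · have heq : |g i0 j0 - 1| = tDelta A x - 1 := by
      rw [hDmax] at hDelta_one ⊢
      rw [abs_of_nonneg (by linarith)]
    calc tDelta A x - 1 = |g i0 j0 - 1| := heq.symm
      _ ≤ ⨆ j, |g j j0 - 1| := le_ciSup (f := fun j => |g j j0 - 1|) (Finite.bddAbove_range _) i0
      _ ≤ ⨆ i, ⨆ j, |g j i - 1| :=
          le_ciSup (f := fun i => ⨆ j, |g j i - 1|) (Finite.bddAbove_range _) j0


/-- For a symmetrically reciprocal positive matrix `A` and a positive vector `x`,
the maximum relative error `max_{i,j} |a_ij − x_i/x_j| / a_ij` equals `Δ_A(x) − 1`;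
consequently `x` minimizes the maximum relative error over positive vectors if and
only if it minimizes `Δ_A`. -/
theorem relErr_eq_delta_sub_one (n : ℕ) (hn : 1 ≤ n)
    (A : Matrix (Fin n) (Fin n) ℝ) (hA : ∀ i j, 0 < A i j)
    (hrec : ∀ i j, A j i = 1 / A i j)
    (x : Fin n → ℝ) (hx : ∀ i, 0 < x i) :
    relErr A x = tDelta A x - 1 ∧
      ((∀ y : Fin n → ℝ, (∀ i, 0 < y i) → relErr A x ≤ relErr A y) ↔
        (∀ y : Fin n → ℝ, (∀ i, 0 < y i) → tDelta A x ≤ tDelta A y)) := by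
  have h := relErr_eq_aux hn A hA hrec x hx
  refine ⟨h, ?_⟩
  constructor
  · intro H y hy
    have hy' := relErr_eq_aux hn A hA hrec y hy
    have := H y hy
    linarith
  · intro H y hy
    have hy' := relErr_eq_aux hn A hA hrec y hy
    have := H y hy
    linarith
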